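/- Let (C,d) be a complete metric space, α ∈ [0,1), and ψ : [0,∞)³ → [0,∞) a continuous function such that whenever b ≤ ψ(a,a,b) or b ≤ ψ(b,a,a) or b ≤ ψ(a,b,a) one has b ≤ αa. If T₁, T₂ : C → C satisfy d(T₁x, T₂y) ≤ ψ(d(x,y), d(x,T₁x), d(y,T₂y)) for all x,y ∈ C, then T₁ and T₂ have a unique common fixed point. -/

import Mathlib

open Filter Topology
set_option maxHeartbeats 800000

private def seq3 {C : Type*} (T₁ T₂ : C → C) (x0 : C) : ℕ → C
  | 0 => x0
  | (n+1) => if Even n then T₁ (seq3 T₁ T₂ x0 n) else T₂ (seq3 T₁ T₂ x0 n)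

/-- Common fixed point theorem: if T₁, T₂ on a complete metric space satisfy
d(T₁x,T₂y) ≤ ψ(d(x,y), d(x,T₁x), d(y,T₂y)) for some ψ ∈ Ψ_α with α ∈ [0,1),
then T₁ and T₂ have a unique common fixed point. -/
theorem stmt3 {C : Type*} [MetricSpace C] [CompleteSpace C] [Nonempty C]
    (α : ℝ) (hα0 : 0 ≤ α) (hα1 : α < 1)
    (ψ : ℝ → ℝ → ℝ → ℝ)
    (hcont : Continuous (fun p : ℝ × ℝ × ℝ => ψ p.1 p.2.1 p.2.2))
    (hnonneg : ∀ a b c : ℝ, 0 ≤ a → 0 ≤ b → 0 ≤ c → 0 ≤ ψ a b c)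
    (hψ : ∀ a b : ℝ, 0 ≤ a → 0 ≤ b →
      (b ≤ ψ a a b ∨ b ≤ ψ b a a ∨ b ≤ ψ a b a) → b ≤ α * a)
    (T₁ T₂ : C → C)
    (hT : ∀ x y : C,
      dist (T₁ x) (T₂ y) ≤ ψ (dist x y) (dist x (T₁ x)) (dist y (T₂ y))) :
    ∃! z : C, T₁ z = z ∧ T₂ z = z := by
  obtain ⟨x0⟩ := ‹Nonempty C›
  set x : ℕ → C := seq3 T₁ T₂ x0 with hx
  have hxe : ∀ n, Even n → x (n+1) = T₁ (x n) := by
    intro n hn; simp [hx, seq3, hn]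
  have hxo : ∀ n, ¬ Even n → x (n+1) = T₂ (x n) := by
    intro n hn; simp [hx, seq3, hn]
  -- contraction step
  have step : ∀ n, dist (x (n+1)) (x (n+2)) ≤ α * dist (x n) (x (n+1)) := by
    intro n
    by_cases hn : Even n
    · have h1 : x (n+1) = T₁ (x n) := hxe n hn
      have h2 : x (n+2) = T₂ (x (n+1)) := by
        apply hxo; simp [Nat.even_add_one, hn]
      have key := hT (x n) (x (n+1))
      rw [← h1, ← h2] at key
      exact hψ _ _ dist_nonneg dist_nonneg (Or.inl key)
    · have h1 : x (n+1) = T₂ (x n) := hxo n hn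
      have h2 : x (n+2) = T₁ (x (n+1)) := by
        apply hxe; simp [Nat.even_add_one, hn]
      have key := hT (x (n+1)) (x n)
      rw [← h1, ← h2, dist_comm (x (n+1)) (x n),
        dist_comm (x (n+2)) (x (n+1))] at key
      exact hψ _ _ dist_nonneg dist_nonneg (Or.inr (Or.inr key))
  have geom : ∀ n, dist (x n) (x (n+1)) ≤ dist (x 0) (x 1) * α ^ n := by
    intro n
    induction n with
    | zero => simp
    | succ k ih =>
      calc dist (x (k+1)) (x (k+2)) ≤ α * dist (x k) (x (k+1)) := step k
        _ ≤ α * (dist (x 0) (x 1) * α ^ k) := by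
            exact mul_le_mul_of_nonneg_left ih hα0
        _ = dist (x 0) (x 1) * α ^ (k+1) := by ring
  have hcauchy : CauchySeq x :=
    cauchySeq_of_le_geometric α (dist (x 0) (x 1)) hα1 geom
  obtain ⟨z, hz⟩ := cauchySeq_tendsto_of_complete hcauchy
  have haux : ∀ c : ℕ, Tendsto (fun n : ℕ => 2*n+c) atTop atTop := fun c =>
    tendsto_atTop_atTop.mpr (fun b => ⟨b, fun n hn => by omega⟩)
  have heven : Tendsto (fun n => x (2*n)) atTop (𝓝 z) := by
    simpa [Function.comp_def] using hz.comp (haux 0)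
  have hodd : Tendsto (fun n => x (2*n+1)) atTop (𝓝 z) := hz.comp (haux 1)
  have hodd2 : Tendsto (fun n => x (2*n+2)) atTop (𝓝 z) := hz.comp (haux 2)
  -- T₂ z = z
  have hT2 : T₂ z = z := by
    have hle : ∀ n, dist (x (2*n+1)) (T₂ z) ≤
        ψ (dist (x (2*n)) z) (dist (x (2*n)) (x (2*n+1))) (dist z (T₂ z)) := by
      intro n
      have h1 : x (2*n+1) = T₁ (x (2*n)) := hxe _ (even_two_mul n)
      calc dist (x (2*n+1)) (T₂ z) = dist (T₁ (x (2*n))) (T₂ z) := by rw [h1]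
        _ ≤ ψ (dist (x (2*n)) z) (dist (x (2*n)) (T₁ (x (2*n)))) (dist z (T₂ z)) := hT _ _
        _ = ψ (dist (x (2*n)) z) (dist (x (2*n)) (x (2*n+1))) (dist z (T₂ z)) := by rw [h1]
    have hL : Tendsto (fun n => dist (x (2*n+1)) (T₂ z)) atTop (𝓝 (dist z (T₂ z))) :=
      hodd.dist tendsto_const_nhds
    have hR : Tendsto (fun n => ψ (dist (x (2*n)) z) (dist (x (2*n)) (x (2*n+1)))
        (dist z (T₂ z))) atTop (𝓝 (ψ 0 0 (dist z (T₂ z)))) := by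
      have htrip : Tendsto (fun n => (dist (x (2*n)) z, dist (x (2*n)) (x (2*n+1)),
          dist z (T₂ z))) atTop (𝓝 ((0:ℝ), (0:ℝ), dist z (T₂ z))) := by
        rw [nhds_prod_eq, nhds_prod_eq]
        simpa [dist_self] using (heven.dist (tendsto_const_nhds (x := z))).prodMk
          ((heven.dist hodd).prodMk (tendsto_const_nhds (x := dist z (T₂ z)) (f := atTop)))
      exact (hcont.tendsto ((0:ℝ), (0:ℝ), dist z (T₂ z))).comp htrip
    have hlim : dist z (T₂ z) ≤ ψ 0 0 (dist z (T₂ z)) :=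
      le_of_tendsto_of_tendsto' hL hR hle
    have := hψ 0 (dist z (T₂ z)) le_rfl dist_nonneg (Or.inl hlim)
    have h0 : dist z (T₂ z) = 0 := le_antisymm (by linarith) dist_nonneg
    exact (eq_of_dist_eq_zero h0).symm
  -- T₁ z = z
  have hT1 : T₁ z = z := by
    have hle : ∀ n, dist (T₁ z) (x (2*n+2)) ≤
        ψ (dist z (x (2*n+1))) (dist z (T₁ z)) (dist (x (2*n+1)) (x (2*n+2))) := by
      intro n
      have h2 : x (2*n+2) = T₂ (x (2*n+1)) := by
        apply hxo; simp [Nat.even_add_one, even_two_mul]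
      calc dist (T₁ z) (x (2*n+2)) = dist (T₁ z) (T₂ (x (2*n+1))) := by rw [h2]
        _ ≤ ψ (dist z (x (2*n+1))) (dist z (T₁ z)) (dist (x (2*n+1)) (T₂ (x (2*n+1)))) := hT _ _
        _ = ψ (dist z (x (2*n+1))) (dist z (T₁ z)) (dist (x (2*n+1)) (x (2*n+2))) := by rw [h2]
    have hL : Tendsto (fun n => dist (T₁ z) (x (2*n+2))) atTop (𝓝 (dist (T₁ z) z)) :=
      tendsto_const_nhds.dist hodd2
    have hR : Tendsto (fun n => ψ (dist z (x (2*n+1))) (dist z (T₁ z))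
        (dist (x (2*n+1)) (x (2*n+2)))) atTop (𝓝 (ψ 0 (dist z (T₁ z)) 0)) := by
      have htrip : Tendsto (fun n => (dist z (x (2*n+1)), dist z (T₁ z),
          dist (x (2*n+1)) (x (2*n+2)))) atTop (𝓝 ((0:ℝ), dist z (T₁ z), (0:ℝ))) := by
        rw [nhds_prod_eq, nhds_prod_eq]
        simpa [dist_self] using ((tendsto_const_nhds (x := z)).dist hodd).prodMk
          (Tendsto.prodMk (tendsto_const_nhds (x := dist z (T₁ z)) (f := atTop))
            (hodd.dist hodd2))
      exact (hcont.tendsto ((0:ℝ), dist z (T₁ z), (0:ℝ))).comp htrip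
    have hlim : dist (T₁ z) z ≤ ψ 0 (dist z (T₁ z)) 0 :=
      le_of_tendsto_of_tendsto' hL hR hle
    rw [dist_comm] at hlim
    have := hψ 0 (dist z (T₁ z)) le_rfl dist_nonneg (Or.inr (Or.inr hlim))
    have h0 : dist z (T₁ z) = 0 := le_antisymm (by linarith) dist_nonneg
    exact (eq_of_dist_eq_zero h0).symm
  refine ⟨z, ⟨hT1, hT2⟩, ?_⟩
  rintro w ⟨hw1, hw2⟩
  have key := hT w z
  rw [hw1, hT2] at key
  simp only [dist_self] at key
  have := hψ 0 (dist w z) le_rfl dist_nonneg (Or.inr (Or.inl key))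
  have h0 : dist w z = 0 := le_antisymm (by linarith) dist_nonneg
  exact eq_of_dist_eq_zero h0
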